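/- For all p ≥ 1 and N ≥ 1: #{(i,j) ∈ ({1,…,N}^p)² : [i]=[j] as multisets} = ∫_{𝕋^N} |a_1 + ⋯ + a_N|^{2p} da, where da is the Haar probability measure on 𝕋^N. -/

import Mathlib

open Finset MeasureTheory

/-- The point `e(u) = exp(2πiu)` of the unit circle. -/
noncomputable def e (u : ℝ) : ℂ := Complex.exp (2 * Real.pi * u * Complex.I)

/-- The cube `[0,1]^N`, parametrizing `𝕋^N` with its Haar probability measure. -/
def Box (N : ℕ) : Set (Fin N → ℝ) := Set.univ.pi fun _ => Set.Icc 0 1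

@[fun_prop]
lemma continuous_e : Continuous e := by
  unfold e; fun_prop

theorem integral_pi_prod {n : ℕ} (μ : Fin n → Measure ℝ) [∀ i, SigmaFinite (μ i)]
    (f : Fin n → ℝ → ℂ) :
    ∫ x : Fin n → ℝ, ∏ i, f i (x i) ∂Measure.pi μ = ∏ i, ∫ x, f i x ∂μ i := by
  induction n with
  | zero =>
      simp [integral_const, Measure.real, Measure.pi_univ]
  | succ n ih =>
      calc
        ∫ x : Fin (n+1) → ℝ, ∏ i, f i (x i) ∂Measure.pi μ
            = ∫ x : ℝ × (Fin n → ℝ), f 0 x.1 * ∏ i : Fin n, f (Fin.succ i) (x.2 i)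
              ∂(μ 0).prod (Measure.pi fun i => μ (Fin.succ i)) := by
          rw [← ((MeasureTheory.measurePreserving_piFinSuccAbove μ 0).symm).integral_comp']
          simp_rw [MeasurableEquiv.piFinSuccAbove_symm_apply, Fin.insertNthEquiv,
            Fin.prod_univ_succ, Fin.insertNth_zero, Equiv.coe_fn_mk, Fin.cons_succ,
            Fin.zero_succAbove, Fin.cons_zero, cast_eq]
        _ = (∫ x, f 0 x ∂μ 0) * ∏ i : Fin n, ∫ x, f (Fin.succ i) x ∂μ (Fin.succ i) := by
          rw [← ih, ← integral_prod_mul]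
        _ = ∏ i, ∫ x, f i x ∂μ i := by rw [Fin.prod_univ_succ]

theorem volume_restrict_box (N : ℕ) :
    (volume : Measure (Fin N → ℝ)).restrict (Box N)
      = Measure.pi fun _ : Fin N => volume.restrict (Set.Icc 0 1) := by
  refine (Measure.pi_eq fun s hs => ?_).symm
  rw [Measure.restrict_apply (MeasurableSet.univ_pi hs)]
  have : Set.univ.pi s ∩ Box N = Set.univ.pi fun i => s i ∩ Set.Icc 0 1 := by
    rw [Box, ← Set.pi_inter_distrib]
  rw [this, volume_pi_pi]
  simp [Measure.restrict_apply (hs _)]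

theorem integral_box_prod (N : ℕ) (f : Fin N → ℝ → ℂ) :
    ∫ x in Box N, ∏ i, f i (x i) = ∏ i, ∫ u in Set.Icc (0:ℝ) 1, f i u := by
  rw [volume_restrict_box, integral_pi_prod]

lemma e_pow_mul_conj_pow (u : ℝ) (n m : ℕ) :
    e u ^ n * (starRingEnd ℂ) (e u) ^ m
      = Complex.exp ((((n : ℂ) - m) * (2 * Real.pi * Complex.I)) * u) := by
  have hconj : (starRingEnd ℂ) (e u) = Complex.exp (-(2 * Real.pi * u * Complex.I)) := by
    rw [e, ← Complex.exp_conj]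
    congr 1
    simp only [map_mul, Complex.conj_I, Complex.conj_ofReal, map_ofNat]
    ring
  rw [hconj, e, ← Complex.exp_nat_mul, ← Complex.exp_nat_mul, ← Complex.exp_add]
  congr 1
  ring

lemma integral_e_pow (n m : ℕ) :
    (∫ u in Set.Icc (0:ℝ) 1, e u ^ n * (starRingEnd ℂ) (e u) ^ m)
      = if n = m then 1 else 0 := by
  simp_rw [e_pow_mul_conj_pow]
  by_cases h : n = m
  · simp [h]
  · rw [if_neg h]
    set c : ℂ := ((n : ℂ) - m) * (2 * Real.pi * Complex.I) with hc
    have hnm : ((n : ℂ) - m) ≠ 0 := by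
      intro hh
      apply h
      exact_mod_cast sub_eq_zero.mp hh
    have hc0 : c ≠ 0 := by
      apply mul_ne_zero hnm
      simp [Real.pi_ne_zero, Complex.I_ne_zero]
    rw [MeasureTheory.integral_Icc_eq_integral_Ioc,
      ← intervalIntegral.integral_of_le (zero_le_one), integral_exp_mul_complex hc0]
    have h1 : Complex.exp (c * 1) = 1 := by
      have := Complex.exp_int_mul_two_pi_mul_I ((n : ℤ) - m)
      rw [mul_one, hc]
      rw [← this]
      congr 1
      push_cast
      ring
    push_cast
    rw [h1, mul_zero, Complex.exp_zero, sub_self, zero_div]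

/-- Number of indices mapping to `k`. -/
def cnt {p N : ℕ} (i : Fin p → Fin N) (k : Fin N) : ℕ :=
  (univ.filter fun a => i a = k).card

/-- The term of the expanded `2p`-th power. -/
noncomputable def F {p N : ℕ} (i j : Fin p → Fin N) (t : Fin N → ℝ) : ℂ :=
  (∏ a, e (t (i a))) * ∏ a, (starRingEnd ℂ) (e (t (j a)))

lemma count_map_eq_cnt {p N : ℕ} (f : Fin p → Fin N) (k : Fin N) :
    Multiset.count k ((univ : Finset (Fin p)).val.map f) = cnt f k := by
  rw [Multiset.count_map]
  have h1 : (fun a => k = f a) = fun a => f a = k := funext fun a => propext eq_comm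
  simp only [h1]
  rw [cnt, ← Finset.filter_val]
  rfl

lemma F_eq_prod {p N : ℕ} (i j : Fin p → Fin N) (t : Fin N → ℝ) :
    F i j t = ∏ k, (e (t k) ^ cnt i k * (starRingEnd ℂ) (e (t k)) ^ cnt j k) := by
  rw [F, Finset.prod_mul_distrib]
  congr 1
  · rw [← Finset.prod_fiberwise' univ i fun k => e (t k)]
    exact Finset.prod_congr rfl fun k _ => Finset.prod_const _
  · rw [← Finset.prod_fiberwise' univ j fun k => (starRingEnd ℂ) (e (t k))]
    exact Finset.prod_congr rfl fun k _ => Finset.prod_const _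

/-- The number of pairs of multi-indices `i, j ∈ {1,…,N}^p` that are equal as
multisets equals the integral `∫_{𝕋^N} |a₁ + ⋯ + a_N|^{2p} da` over the Haar
probability measure on `𝕋^N`. -/
theorem count_multiset_pairs_eq_torus_integral (p N : ℕ) (hp : 1 ≤ p) (hN : 1 ≤ N) :
    ((Finset.univ.filter (fun ij : (Fin p → Fin N) × (Fin p → Fin N) =>
        Finset.univ.val.map ij.1 = Finset.univ.val.map ij.2)).card : ℝ) =
      ∫ t in Box N, ‖∑ k, e (t k)‖ ^ (2 * p) := by
  classical
  have hbox : IsCompact (Box N) := isCompact_univ_pi fun _ => isCompact_Icc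
  have hInt : ∀ i j : Fin p → Fin N, IntegrableOn (F i j) (Box N) := by
    intro i j
    have hcont : Continuous (F i j) :=
      (continuous_finset_prod _ fun a _ =>
          continuous_e.comp (continuous_apply (i a))).mul
        (continuous_finset_prod _ fun a _ =>
          Complex.continuous_conj.comp (continuous_e.comp (continuous_apply (j a))))
    exact hcont.continuousOn.integrableOn_compact hbox
  have key : ∀ t : Fin N → ℝ, ((‖∑ k, e (t k)‖ ^ (2 * p) : ℝ) : ℂ)
      = ∑ i : Fin p → Fin N, ∑ j : Fin p → Fin N, F i j t := by
    intro t
    have h2 : ((‖∑ k, e (t k)‖ : ℝ) : ℂ) ^ 2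
        = (∑ k, e (t k)) * (starRingEnd ℂ) (∑ k, e (t k)) := by
      rw [Complex.mul_conj]
      norm_cast
      exact Complex.sq_norm _
    push_cast
    rw [pow_mul, h2, mul_pow, map_sum, Fintype.sum_pow, Fintype.sum_pow,
      Finset.sum_mul_sum]
    rfl
  have hcoe : ∫ t in Box N, ((‖∑ k, e (t k)‖ ^ (2 * p) : ℝ) : ℂ)
      = ((∫ t in Box N, ‖∑ k, e (t k)‖ ^ (2 * p) : ℝ) : ℂ) :=
    integral_ofReal
  rw [← Complex.ofReal_inj, ← hcoe]
  simp_rw [key]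
  rw [integral_finset_sum _ fun i _ => integrable_finset_sum _ fun j _ => hInt i j]
  have hcard : (((Finset.univ.filter (fun ij : (Fin p → Fin N) × (Fin p → Fin N) =>
        Finset.univ.val.map ij.1 = Finset.univ.val.map ij.2)).card : ℝ) : ℂ)
      = ∑ i : Fin p → Fin N, ∑ j : Fin p → Fin N,
          if (univ : Finset (Fin p)).val.map i = (univ : Finset (Fin p)).val.map j
          then (1 : ℂ) else 0 := by
    rw [Finset.card_filter]
    push_cast
    rw [Fintype.sum_prod_type]
    refine Finset.sum_congr rfl fun x _ => Finset.sum_congr rfl fun y _ => ?_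
    norm_cast
  rw [hcard]
  refine Finset.sum_congr rfl fun i _ => ?_
  rw [integral_finset_sum _ fun j _ => hInt i j]
  refine Finset.sum_congr rfl fun j _ => ?_
  have hterm : (∫ t in Box N, F i j t)
      = ∏ k, ∫ u in Set.Icc (0:ℝ) 1,
          e u ^ cnt i k * (starRingEnd ℂ) (e u) ^ cnt j k := by
    simp_rw [F_eq_prod i j]
    exact integral_box_prod N fun k u => e u ^ cnt i k * (starRingEnd ℂ) (e u) ^ cnt j k
  rw [hterm]
  simp_rw [integral_e_pow]
  rw [Finset.prod_boole]
  have hiff : ((univ : Finset (Fin p)).val.map i = (univ : Finset (Fin p)).val.map j)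
      ↔ (∀ k ∈ (univ : Finset (Fin N)), cnt i k = cnt j k) := by
    rw [Multiset.ext]
    constructor
    · intro h k _
      rw [← count_map_eq_cnt i k, ← count_map_eq_cnt j k, h]
    · intro h k
      rw [count_map_eq_cnt i k, count_map_eq_cnt j k]
      exact h k (mem_univ k)
  by_cases hc : Multiset.map i univ.val = Multiset.map j univ.val
  · rw [if_pos hc, if_pos (hiff.mp hc)]
  · rw [if_neg hc, if_neg fun hh => hc (hiff.mpr hh)]
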